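/- arXiv:1509.05010 — 4 statements merged into one kernel-verified Lean document; each statement's English description precedes it below -/
import Mathlib

section
/- Let f:ℝ→ℝ satisfy the Lipschitz condition with constant L>0 on [a,b], let x_0,…,x_k ∈ [a,b] be trial points with values z_i = f(x_i), and let F_k(x) = max_{0≤i≤k} (z_i − L·|x−x_i|). Then the global minimum value f* = min_{x∈[a,b]} f(x) is bracketed as: min_{x∈[a,b]} F_k(x) ≤ f* ≤ min_{0≤i≤k} z_i. -/
/-- If `f` is Lipschitz with constant `L > 0` on `[a,b]` and
`F_k(x) = max_{0 ≤ i ≤ k} (f(x_i) − L·|x − x_i|)`, then the global minimum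
value `f* = f(x*)` (where `x*` is a global minimizer of `f` on `[a,b]`) is
bracketed: `min_{x∈[a,b]} F_k(x) ≤ f* ≤ min_{0 ≤ i ≤ k} f(x_i)`. -/
theorem global_minimum_bracketed
    (f : ℝ → ℝ) (L a b : ℝ) (hL : 0 < L) (hab : a < b)
    (hf : ∀ x ∈ Set.Icc a b, ∀ y ∈ Set.Icc a b, |f x - f y| ≤ L * |x - y|)
    (k : ℕ) (p : Fin (k + 1) → ℝ) (hp : ∀ i, p i ∈ Set.Icc a b)
    (xstar : ℝ) (hxstar : xstar ∈ Set.Icc a b)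
    (hmin : IsMinOn f (Set.Icc a b) xstar) :
    sInf ((fun x => Finset.univ.sup' Finset.univ_nonempty
        fun i : Fin (k + 1) => f (p i) - L * |x - p i|) '' Set.Icc a b)
      ≤ f xstar ∧
    f xstar ≤ Finset.univ.inf' Finset.univ_nonempty
        fun i : Fin (k + 1) => f (p i) := by
  constructor
  · -- sInf ≤ F(xstar) ≤ f xstar
    have hbdd : BddBelow ((fun x => Finset.univ.sup' Finset.univ_nonempty
        fun i : Fin (k + 1) => f (p i) - L * |x - p i|) '' Set.Icc a b) := by
      refine ⟨f (p 0) - L * (b - a), ?_⟩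
      rintro y ⟨x, hx, rfl⟩
      refine le_trans ?_ (Finset.le_sup' _ (Finset.mem_univ (0 : Fin (k+1))))
      have h1 : |x - p 0| ≤ b - a := by
        have := hp 0
        rw [abs_le]
        constructor <;> [nlinarith [hx.1, hx.2, this.1, this.2];
          nlinarith [hx.1, hx.2, this.1, this.2]]
      nlinarith
    have hmem : (Finset.univ.sup' Finset.univ_nonempty
        fun i : Fin (k + 1) => f (p i) - L * |xstar - p i|) ∈
        ((fun x => Finset.univ.sup' Finset.univ_nonempty
        fun i : Fin (k + 1) => f (p i) - L * |x - p i|) '' Set.Icc a b) :=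
      ⟨xstar, hxstar, rfl⟩
    refine le_trans (csInf_le hbdd hmem) ?_
    rw [Finset.sup'_le_iff]
    intro i _
    have := hf (p i) (hp i) xstar hxstar
    have h2 := abs_le.mp this
    have h3 : L * |xstar - p i| = L * |p i - xstar| := by rw [abs_sub_comm]
    linarith [h2.2, h3.le, h3.ge]
  · rw [Finset.le_inf'_iff]
    intro i _
    exact hmin (hp i)
end

section
/- Let f:ℝ→ℝ satisfy the Lipschitz condition with constant L>0 on [a,b], let a ≤ x_0 < x_1 < … < x_k ≤ b be sorted trial points with values z_i = f(x_i), and let F_k(x) = max_{0≤i≤k} (z_i − L·|x−x_i|). Then for every index i with 1 ≤ i ≤ k and every x ∈ [x_{i−1}, x_i], the lower bounding function reduces to the two adjacent terms: F_k(x) = max( z_{i−1} − L·(x − x_{i−1}), z_i − L·(x_i − x) ). -/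
/-- If `f` is Lipschitz with constant `L > 0` on `[a,b]` and
`a ≤ x₀ < x₁ < … < x_k ≤ b` are sorted trial points with values `z_i = f(x_i)`,
then for every `1 ≤ i ≤ k` and every `x ∈ [x_{i−1}, x_i]`, the lower bounding
function `F_k(x) = max_{0 ≤ j ≤ k} (z_j − L·|x − x_j|)` reduces to the two
adjacent terms:
`F_k(x) = max (z_{i−1} − L·(x − x_{i−1})) (z_i − L·(x_i − x))`. -/
theorem minorant_two_adjacent_terms
    (f : ℝ → ℝ) (L a b : ℝ) (hL : 0 < L) (hab : a < b)
    (hf : ∀ x ∈ Set.Icc a b, ∀ y ∈ Set.Icc a b, |f x - f y| ≤ L * |x - y|)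
    (k : ℕ) (p : Fin (k + 1) → ℝ) (hmono : StrictMono p)
    (ha : a ≤ p 0) (hb : p (Fin.last k) ≤ b)
    (i : ℕ) (hi1 : 1 ≤ i) (hik : i ≤ k)
    (x : ℝ) (hx : x ∈ Set.Icc (p ⟨i - 1, by omega⟩) (p ⟨i, by omega⟩)) :
    (Finset.univ.sup' Finset.univ_nonempty
        fun j : Fin (k + 1) => f (p j) - L * |x - p j|) =
      max (f (p ⟨i - 1, by omega⟩) - L * (x - p ⟨i - 1, by omega⟩))
          (f (p ⟨i, by omega⟩) - L * (p ⟨i, by omega⟩ - x)) := by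
  obtain ⟨hx1, hx2⟩ := hx
  set i1 : Fin (k + 1) := ⟨i - 1, by omega⟩
  set i2 : Fin (k + 1) := ⟨i, by omega⟩
  have hmem : ∀ j : Fin (k + 1), p j ∈ Set.Icc a b := by
    intro j
    exact ⟨le_trans ha (hmono.monotone (Fin.zero_le j)),
      le_trans (hmono.monotone (Fin.le_last j)) hb⟩
  apply le_antisymm
  · apply Finset.sup'_le
    intro j _
    by_cases hji : (j : ℕ) ≤ i - 1
    · -- p j ≤ p i1 ≤ x
      have hpj : p j ≤ p i1 := hmono.monotone (Fin.le_iff_val_le_val.mpr hji)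
      have habs : |x - p j| = x - p j := abs_of_nonneg (by linarith)
      have hlip : f (p j) - f (p i1) ≤ L * (p i1 - p j) := by
        have := hf (p j) (hmem j) (p i1) (hmem i1)
        have h2 : |p j - p i1| = p i1 - p j := by
          rw [abs_sub_comm]; exact abs_of_nonneg (by linarith)
        calc f (p j) - f (p i1) ≤ |f (p j) - f (p i1)| := le_abs_self _
          _ ≤ L * |p j - p i1| := this
          _ = L * (p i1 - p j) := by rw [h2]
      have : f (p j) - L * (x - p j) ≤ f (p i1) - L * (x - p i1) := by nlinarith
      rw [habs]
      exact le_max_of_le_left this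
    · -- i ≤ j, so x ≤ p i2 ≤ p j
      have hji' : (i2 : ℕ) ≤ (j : ℕ) := by simp [i2]; omega
      have hpj : p i2 ≤ p j := hmono.monotone hji'
      have habs : |x - p j| = p j - x := by
        rw [abs_sub_comm]; exact abs_of_nonneg (by linarith)
      have hlip : f (p j) - f (p i2) ≤ L * (p j - p i2) := by
        have := hf (p j) (hmem j) (p i2) (hmem i2)
        have h2 : |p j - p i2| = p j - p i2 := abs_of_nonneg (by linarith)
        calc f (p j) - f (p i2) ≤ |f (p j) - f (p i2)| := le_abs_self _
          _ ≤ L * |p j - p i2| := this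
          _ = L * (p j - p i2) := by rw [h2]
      have : f (p j) - L * (p j - x) ≤ f (p i2) - L * (p i2 - x) := by nlinarith
      rw [habs]
      exact le_max_of_le_right this
  · apply max_le
    · have h1 : |x - p i1| = x - p i1 := abs_of_nonneg (by linarith)
      have := Finset.le_sup' (fun j : Fin (k + 1) => f (p j) - L * |x - p j|)
        (Finset.mem_univ i1)
      rw [h1] at this; exact this
    · have h2 : |x - p i2| = p i2 - x := by
        rw [abs_sub_comm]; exact abs_of_nonneg (by linarith)
      have := Finset.le_sup' (fun j : Fin (k + 1) => f (p j) - L * |x - p j|)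
        (Finset.mem_univ i2)
      rw [h2] at this; exact this
end

section
/- Let f:ℝ→ℝ satisfy the Lipschitz condition with constant L>0 on [a,b], and let a = x_0 < x_1 < … < x_k = b be sorted trial points covering [a,b] with values z_i = f(x_i). Then the global minimum of f over [a,b] satisfies min_{x∈[a,b]} f(x) ≥ min_{1≤i≤k} ( (z_{i−1} + z_i)/2 − L·(x_i − x_{i−1})/2 ). -/
open Classical in
lemma exists_interval_aux (k : ℕ) (hk : 0 < k) (p : Fin (k+1) → ℝ)
    (hmono : Monotone p) (x : ℝ) (h1 : p 0 ≤ x) (h2 : x ≤ p (Fin.last k)) :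
    ∃ i : Fin k, p i.castSucc ≤ x ∧ x ≤ p i.succ := by
  set q : ℕ → ℝ := fun j => p ⟨min j k, by omega⟩ with hq
  have hP0 : q 0 ≤ x := by
    have : (⟨min 0 k, by omega⟩ : Fin (k+1)) = 0 := by
      ext; simp
    simpa [hq, this] using h1
  set m := Nat.findGreatest (fun j => q j ≤ x) k with hm
  have hmk : m ≤ k := Nat.findGreatest_le k
  have hPm : q m ≤ x := Nat.findGreatest_spec (P := fun j => q j ≤ x) (Nat.zero_le k) hP0
  rcases eq_or_lt_of_le hmk with heq | hlt
  · -- m = k : then p last ≤ x so x = p last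
    have hqk : q k ≤ x := by rw [← heq]; exact hPm
    have hqk' : q k = p (Fin.last k) := by
      simp [hq, Fin.last]
    have hxb : x = p (Fin.last k) := le_antisymm h2 (hqk' ▸ hqk)
    refine ⟨⟨k - 1, by omega⟩, ?_, ?_⟩
    · exact le_of_le_of_eq (hmono (Fin.le_last _)) hxb.symm
    · have : (Fin.succ (⟨k - 1, by omega⟩ : Fin k)) = Fin.last k := by
        ext; simp [Fin.last]; omega
      exact hxb.trans_le (le_of_eq (congrArg p this.symm))
  · refine ⟨⟨m, hlt⟩, ?_, ?_⟩
    · have : (Fin.castSucc (⟨m, hlt⟩ : Fin k)) = ⟨min m k, by omega⟩ := by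
        ext; simp [Nat.min_eq_left hmk]
      rw [this]; exact hPm
    · have hng : ¬ q (m + 1) ≤ x :=
        Nat.findGreatest_is_greatest (P := fun j => q j ≤ x) (Nat.lt_succ_self m) hlt
      have : (Fin.succ (⟨m, hlt⟩ : Fin k)) = ⟨min (m+1) k, by omega⟩ := by
        ext; simp [Nat.min_eq_left hlt]
      rw [this]
      exact le_of_lt (lt_of_not_ge hng)


/-- If `f` is Lipschitz with constant `L > 0` on `[a,b]` and
`a = x₀ < x₁ < … < x_k = b` are sorted trial points covering `[a,b]` with
values `z_i = f(x_i)`, then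
`min_{x∈[a,b]} f(x) ≥ min_{1 ≤ i ≤ k} ((z_{i−1} + z_i)/2 − L·(x_i − x_{i−1})/2)`,
i.e. every value `f(x)`, `x ∈ [a,b]`, is bounded below by the smallest
characteristic `R_i`. -/
theorem min_characteristic_lower_bound
    (f : ℝ → ℝ) (L a b : ℝ) (hL : 0 < L) (hab : a < b)
    (hf : ∀ x ∈ Set.Icc a b, ∀ y ∈ Set.Icc a b, |f x - f y| ≤ L * |x - y|)
    (k : ℕ) (p : Fin (k + 1) → ℝ) (hmono : StrictMono p)
    (ha : p 0 = a) (hb : p (Fin.last k) = b)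
    (x : ℝ) (hx : x ∈ Set.Icc a b) :
    (Finset.univ.inf'
        (by
          refine ⟨⟨0, ?_⟩, Finset.mem_univ _⟩
          rcases Nat.eq_zero_or_pos k with h | h
          · exfalso
            subst h
            exact absurd (ha ▸ hb ▸ rfl : a = b) hab.ne
          · exact h)
        fun i : Fin k =>
          (f (p i.castSucc) + f (p i.succ)) / 2 -
            L * (p i.succ - p i.castSucc) / 2) ≤ f x := by
  obtain ⟨hx1, hx2⟩ := hx
  have hk : 0 < k := by
    rcases Nat.eq_zero_or_pos k with h | h
    · exfalso; subst h; exact absurd (ha ▸ hb ▸ rfl : a = b) hab.ne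
    · exact h
  obtain ⟨i, hiu, hiv⟩ :=
    exists_interval_aux k hk p hmono.monotone x (ha ▸ hx1) (hb ▸ hx2)
  have hmem : ∀ j : Fin (k+1), p j ∈ Set.Icc a b := fun j =>
    ⟨ha ▸ hmono.monotone (Fin.zero_le j), hb ▸ hmono.monotone (Fin.le_last j)⟩
  have h1 := hf (p i.castSucc) (hmem _) x ⟨hx1, hx2⟩
  have h2 := hf (p i.succ) (hmem _) x ⟨hx1, hx2⟩
  have e1 : |p i.castSucc - x| = x - p i.castSucc := by
    rw [abs_sub_comm]; exact abs_of_nonneg (by linarith)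
  have e2 : |p i.succ - x| = p i.succ - x := abs_of_nonneg (by linarith)
  rw [e1] at h1; rw [e2] at h2
  refine le_trans (Finset.inf'_le _ (Finset.mem_univ i)) ?_
  have hL2 := hL.le
  linarith [(abs_le.mp h1).2, (abs_le.mp h2).2]
end

section
/- Let {D_i} be a finite family of axis-aligned hyperintervals (boxes) in ℝ^N, each with nonempty interior, such that the interiors of any two distinct boxes in the family are disjoint. Then any point p ∈ ℝ^N is a vertex of at most 2^N boxes of the family, where p is a vertex of the box ∏_{j=1}^N [a_j, b_j] if for every coordinate j either p_j = a_j or p_j = b_j. -/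
/-- Let `B` be a finite family of axis-aligned boxes in `ℝ^N`,
each box given by its endpoint pair `(lo, hi)` with `lo j < hi j` for every
coordinate `j` (nonempty interior), such that the interiors of any two
distinct boxes of the family are disjoint.  Then any point `p ∈ ℝ^N` is a
vertex of at most `2^N` boxes of the family, where `p` is a vertex of the box
`∏_j [lo j, hi j]` if for every coordinate `j` either `p j = lo j` or
`p j = hi j`. -/
theorem vertex_in_at_most_two_pow_boxes
    (N : ℕ) (B : Finset ((Fin N → ℝ) × (Fin N → ℝ)))
    (hne : ∀ q ∈ B, ∀ j, q.1 j < q.2 j)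
    (hdisj : ∀ q ∈ B, ∀ r ∈ B, q ≠ r →
      Disjoint (interior (Set.Icc q.1 q.2)) (interior (Set.Icc r.1 r.2)))
    (p : Fin N → ℝ) :
    Set.ncard {q | q ∈ B ∧ ∀ j, p j = q.1 j ∨ p j = q.2 j} ≤ 2 ^ N := by
  classical
  have hint : ∀ a b : Fin N → ℝ,
      interior (Set.Icc a b) = Set.pi Set.univ fun j => Set.Ioo (a j) (b j) := by
    intro a b
    rw [← Set.pi_univ_Icc, interior_pi_set Set.finite_univ]
    simp
  set S := {q | q ∈ B ∧ ∀ j, p j = q.1 j ∨ p j = q.2 j} with hS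
  set f : ((Fin N → ℝ) × (Fin N → ℝ)) → (Fin N → Bool) :=
    fun q j => if p j = q.1 j then true else false with hf
  have hinj : Set.InjOn f S := by
    rintro q ⟨hqB, hqv⟩ r ⟨hrB, hrv⟩ hfe
    by_contra hqr
    have hiff : ∀ j, (p j = q.1 j ↔ p j = r.1 j) := by
      intro j
      have := congrFun hfe j
      simp only [hf] at this
      by_cases h1 : p j = q.1 j <;> by_cases h2 : p j = r.1 j <;>
        simp [h1, h2] at this ⊢ <;> linarith
    set x : Fin N → ℝ := fun j =>
      if p j = q.1 j then p j + min (q.2 j - p j) (r.2 j - p j) / 2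
      else p j - min (p j - q.1 j) (p j - r.1 j) / 2 with hx
    have hxq : x ∈ interior (Set.Icc q.1 q.2) := by
      rw [hint]
      intro j _
      by_cases h : p j = q.1 j
      · have h' : p j = r.1 j := (hiff j).1 h
        have h1 : q.1 j < q.2 j := hne q hqB j
        have h2 : r.1 j < r.2 j := hne r hrB j
        have hm : 0 < min (q.2 j - p j) (r.2 j - p j) := by
          apply lt_min <;> [linarith; linarith]
        have hm2 : min (q.2 j - p j) (r.2 j - p j) ≤ q.2 j - p j := min_le_left _ _
        simp only [hx, if_pos h]
        constructor <;> [linarith; linarith]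
      · have h2q : p j = q.2 j := (hqv j).resolve_left h
        have h' : ¬ p j = r.1 j := fun hc => h ((hiff j).2 hc)
        have h2r : p j = r.2 j := (hrv j).resolve_left h'
        have h1 : q.1 j < q.2 j := hne q hqB j
        have h2 : r.1 j < r.2 j := hne r hrB j
        have hm : 0 < min (p j - q.1 j) (p j - r.1 j) := by
          apply lt_min <;> [linarith; linarith]
        have hm2 : min (p j - q.1 j) (p j - r.1 j) ≤ p j - q.1 j := min_le_left _ _
        simp only [hx, if_neg h]
        constructor <;> [linarith; linarith]
    have hxr : x ∈ interior (Set.Icc r.1 r.2) := by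
      rw [hint]
      intro j _
      by_cases h : p j = q.1 j
      · have h' : p j = r.1 j := (hiff j).1 h
        have h1 : q.1 j < q.2 j := hne q hqB j
        have h2 : r.1 j < r.2 j := hne r hrB j
        have hm : 0 < min (q.2 j - p j) (r.2 j - p j) := by
          apply lt_min <;> [linarith; linarith]
        have hm2 : min (q.2 j - p j) (r.2 j - p j) ≤ r.2 j - p j := min_le_right _ _
        simp only [hx, if_pos h]
        constructor <;> [linarith; linarith]
      · have h2q : p j = q.2 j := (hqv j).resolve_left h
        have h' : ¬ p j = r.1 j := fun hc => h ((hiff j).2 hc)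
        have h2r : p j = r.2 j := (hrv j).resolve_left h'
        have h1 : q.1 j < q.2 j := hne q hqB j
        have h2 : r.1 j < r.2 j := hne r hrB j
        have hm : 0 < min (p j - q.1 j) (p j - r.1 j) := by
          apply lt_min <;> [linarith; linarith]
        have hm2 : min (p j - q.1 j) (p j - r.1 j) ≤ p j - r.1 j := min_le_right _ _
        simp only [hx, if_neg h]
        constructor <;> [linarith; linarith]
    exact (hdisj q hqB r hrB hqr).ne_of_mem hxq hxr rfl
  have hmaps : ∀ q ∈ S, f q ∈ (Set.univ : Set (Fin N → Bool)) := fun _ _ => trivial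
  calc S.ncard ≤ (Set.univ : Set (Fin N → Bool)).ncard :=
        Set.ncard_le_ncard_of_injOn f hmaps hinj Set.finite_univ
    _ = 2 ^ N := by
        simp [Set.ncard_univ, Nat.card_eq_fintype_card]
end
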